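/- arXiv:2304.10501 — 3 statements merged into one kernel-verified Lean document; each statement's English description precedes it below -/
import Mathlib

section
/- Let F be a free group, H a finitely generated subgroup, and Su the pseudovariety of finite supersolvable groups. Then H is dense in the pro-Su topology on F if and only if for every prime p and every normal subgroup N of F with F/N isomorphic to (ℤ/pℤ) ⋊ C for some C ≤ Aut(ℤ/pℤ), one has HN = F. -/
/-- A group is supersolvable if it has a chain `⊥ = H_0 ≤ ⋯ ≤ H_k = ⊤` of subgroups,
each normal in the whole group, with all successive factors cyclic. -/
def IsSupersolvableGroup (G : Type*) [Group G] : Prop :=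
  ∃ (k : ℕ) (H : Fin (k + 1) → Subgroup G),
    H 0 = ⊥ ∧ H (Fin.last k) = ⊤ ∧
    (∀ i : Fin (k + 1), (H i).Normal) ∧
    (∀ i : Fin k, ∃ g : G, H i.succ = H i.castSucc ⊔ Subgroup.zpowers g)

def addAutToMulAut (A : Type*) [AddGroup A] : Multiplicative (AddAut A) →* MulAut (Multiplicative A) where
  toFun f := AddEquiv.toMultiplicative (Multiplicative.toAdd f)
  map_one' := rfl
  map_mul' _ _ := rfl

/-- The natural action of `C ≤ Aut(ℤ/pℤ) ≅ (ℤ/pℤ)ˣ` on `ℤ/pℤ`. -/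
def unitAct (p : ℕ) : (ZMod p)ˣ →* MulAut (Multiplicative (ZMod p)) :=
  (addAutToMulAut _).comp (DistribMulAction.toAddAut (ZMod p)ˣ (ZMod p))

set_option linter.unusedTactic false
set_option linter.unreachableTactic false

lemma IsSupersolvableGroup.of_surjective {G G' : Type*} [Group G] [Group G']
    (f : G →* G') (hf : Function.Surjective f) (h : IsSupersolvableGroup G) :
    IsSupersolvableGroup G' := by
  obtain ⟨k, Hc, h0, hl, hn, hs⟩ := h
  refine ⟨k, fun i => (Hc i).map f, ?_, ?_, ?_, ?_⟩
  · simp only []; rw [h0, Subgroup.map_bot]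
  · simp only []; rw [hl, Subgroup.map_top_of_surjective f hf]
  · exact fun i => Subgroup.Normal.map (hn i) f hf
  · intro i
    obtain ⟨g, hg⟩ := hs i
    exact ⟨f g, by simp only []; rw [hg, Subgroup.map_sup, MonoidHom.map_zpowers]⟩

lemma IsSupersolvableGroup.of_mulEquiv {G G' : Type*} [Group G] [Group G']
    (e : G ≃* G') (h : IsSupersolvableGroup G) : IsSupersolvableGroup G' :=
  h.of_surjective e.toMonoidHom e.surjective

-- kernel ⊔ zpowers = ⊤ criterion
lemma ker_sup_zpowers_eq_top {G M : Type*} [Group M] [Group G] (f : G →* M) (g : G)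
    (h : ∀ x : G, ∃ n : ℤ, f x = f g ^ n) : f.ker ⊔ Subgroup.zpowers g = ⊤ := by
  rw [eq_top_iff]
  intro x _
  obtain ⟨n, hn⟩ := h x
  have hk : x * g ^ (-n) ∈ f.ker := by
    simp [MonoidHom.mem_ker, hn, zpow_neg]
  have : x = (x * g ^ (-n)) * g ^ n := by group
  rw [this]
  exact mul_mem (Subgroup.mem_sup_left hk)
    (Subgroup.mem_sup_right (Subgroup.zpow_mem _ (Subgroup.mem_zpowers g) n))

instance sdpFinite {N G : Type*} [Group N] [Group G] [Finite N] [Finite G]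
    (φ : G →* MulAut N) : Finite (N ⋊[φ] G) := by
  apply Finite.of_injective (fun x : N ⋊[φ] G => (x.left, x.right))
  intro x y h
  exact SemidirectProduct.ext (congrArg Prod.fst h) (congrArg Prod.snd h)

lemma sdp_supersolvable {N G : Type*} [Group N] [Group G] [hN : IsCyclic N] [hG : IsCyclic G]
    (φ : G →* MulAut N) : IsSupersolvableGroup (N ⋊[φ] G) := by
  obtain ⟨n, hn⟩ := hN.exists_generator
  obtain ⟨g, hgen⟩ := hG.exists_generator
  refine ⟨2, ![⊥, (SemidirectProduct.rightHom : N ⋊[φ] G →* G).ker, ⊤], rfl, rfl, ?_, ?_⟩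
  · intro i
    fin_cases i
    · show (⊥ : Subgroup (N ⋊[φ] G)).Normal; infer_instance
    · exact MonoidHom.normal_ker _
    · show (⊤ : Subgroup (N ⋊[φ] G)).Normal; infer_instance
  · intro i
    fin_cases i
    · refine ⟨SemidirectProduct.inl n, ?_⟩
      show SemidirectProduct.rightHom.ker = ⊥ ⊔ Subgroup.zpowers (SemidirectProduct.inl n)
      rw [bot_sup_eq, ← SemidirectProduct.range_inl_eq_ker_rightHom,
        ← MonoidHom.map_zpowers]
      rw [((Subgroup.eq_top_iff' _).mpr hn : Subgroup.zpowers n = ⊤), ← MonoidHom.range_eq_map]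
    · refine ⟨SemidirectProduct.inr g, ?_⟩
      show (⊤ : Subgroup (N ⋊[φ] G)) = SemidirectProduct.rightHom.ker ⊔ _
      rw [eq_comm]
      apply ker_sup_zpowers_eq_top
      intro x
      obtain ⟨k, hk⟩ := hgen x.right
      refine ⟨k, ?_⟩
      rw [SemidirectProduct.rightHom_inr, show (g:G)^k = x.right from hk]
      rfl

lemma addAut_one_mul {n : ℕ} (f : AddAut (ZMod n)) (x : ZMod n) : f 1 * x = f x := by
  rw [mul_comm, ← x.intCast_zmod_cast, ← zsmul_eq_mul, ← map_zsmul, zsmul_one]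

noncomputable def unitActEquiv (p : ℕ) : (ZMod p)ˣ ≃* MulAut (Multiplicative (ZMod p)) :=
  MulEquiv.ofBijective (unitAct p) (by
    constructor
    · intro u v huv
      have := DFunLike.congr_fun huv (Multiplicative.ofAdd (1 : ZMod p))
      have h2 : u • (1 : ZMod p) = v • (1 : ZMod p) := congrArg Multiplicative.toAdd this
      ext
      simpa [Units.smul_def] using h2
    · intro f
      refine ⟨(ZMod.AddAutEquivUnits p (AddEquiv.toMultiplicative.symm f)).toMul, ?_⟩
      ext x
      show (ZMod.AddAutEquivUnits p (AddEquiv.toMultiplicative.symm f)).toMul • (x.toAdd) = (f x).toAdd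
      rw [Units.smul_def]
      have : ((ZMod.AddAutEquivUnits p (AddEquiv.toMultiplicative.symm f)).toMul : ZMod p)
          = (AddEquiv.toMultiplicative.symm f) 1 := rfl
      rw [this, smul_eq_mul, addAut_one_mul]
      rfl)

lemma unitActEquiv_symm_spec (p : ℕ) (f : MulAut (Multiplicative (ZMod p))) :
    unitAct p ((unitActEquiv p).symm f) = f := by
  have := (unitActEquiv p).apply_symm_apply f
  rwa [show ∀ u, unitActEquiv p u = unitAct p u from fun _ => rfl] at this

lemma exists_normal_zpowers {G : Type*} [Group G] [Nontrivial G]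
    (h : IsSupersolvableGroup G) :
    ∃ g : G, g ≠ 1 ∧ (Subgroup.zpowers g).Normal := by
  obtain ⟨k, Hc, h0, hl, hn, hs⟩ := h
  have hne : ∃ m, ∃ hm : m < k + 1, Hc ⟨m, hm⟩ ≠ ⊥ := by
    refine ⟨k, k.lt_succ_self, ?_⟩
    have : Hc ⟨k, k.lt_succ_self⟩ = ⊤ := hl
    rw [this]
    exact top_ne_bot
  classical
  let j := Nat.find hne
  obtain ⟨hj, hjb⟩ := Nat.find_spec hne
  have hj0 : j ≠ 0 := by
    intro h
    apply hjb
    have : (⟨j, hj⟩ : Fin (k+1)) = 0 := by simp [h, Fin.ext_iff]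
    rw [this, h0]
  have hjk : j - 1 < k := by omega
  have hprev : Hc ⟨j - 1, by omega⟩ = ⊥ := by
    by_contra hne'
    have := Nat.find_min hne (m := j - 1) (by omega)
    exact this ⟨by omega, hne'⟩
  obtain ⟨g, hg⟩ := hs ⟨j - 1, hjk⟩
  have hsucc : (⟨j - 1, hjk⟩ : Fin k).succ = ⟨j, hj⟩ := by
    simp [Fin.ext_iff]; omega
  have hcast : (⟨j - 1, hjk⟩ : Fin k).castSucc = ⟨j - 1, by omega⟩ := by
    simp [Fin.ext_iff]
  rw [hsucc, hcast, hprev, bot_sup_eq] at hg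
  refine ⟨g, ?_, hg ▸ hn ⟨j, hj⟩⟩
  intro hg1
  apply hjb
  rw [hg, hg1, Subgroup.zpowers_one_eq_bot]

lemma exists_prime_order_normal {G : Type*} [Group G] [Finite G] [Nontrivial G]
    (h : IsSupersolvableGroup G) :
    ∃ (p : ℕ), p.Prime ∧ ∃ b : G, orderOf b = p ∧ (Subgroup.zpowers b).Normal := by
  obtain ⟨g, hg1, hgn⟩ := exists_normal_zpowers h
  have hord : orderOf g ≠ 0 := (orderOf_pos g).ne'
  have hord1 : orderOf g ≠ 1 := by simpa [orderOf_eq_one_iff] using hg1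
  set m := orderOf g with hm
  set p := m.minFac with hp
  have hpp : p.Prime := Nat.minFac_prime hord1
  have hpd : p ∣ m := Nat.minFac_dvd m
  set b := g ^ (m / p) with hb
  have hob : orderOf b = p := orderOf_pow_orderOf_div hord hpd
  refine ⟨p, hpp, b, hob, ?_⟩
  -- zpowers b is normal
  have key : ∀ x : G, x * b * x⁻¹ ∈ Subgroup.zpowers b := by
    intro x
    have hbz : b ∈ Subgroup.zpowers g := ⟨((m / p : ℕ) : ℤ), by show g ^ ((m / p : ℕ) : ℤ) = b; rw [zpow_natCast]⟩
    have hc : x * b * x⁻¹ ∈ Subgroup.zpowers g := hgn.conj_mem b hbz x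
    obtain ⟨t, ht⟩ := hc
    simp only at ht
    have hbp : b ^ (p : ℕ) = 1 := by rw [← hob]; exact pow_orderOf_eq_one b
    have hcp : g ^ (t * (p : ℤ)) = 1 := by
      rw [zpow_mul, ht, zpow_natCast, conj_pow, hbp, mul_one, mul_inv_cancel]
    have hdvd : ((m : ℤ)) ∣ t * (p : ℤ) := orderOf_dvd_iff_zpow_eq_one.mpr hcp
    have hmeq : (m : ℤ) = ((m / p : ℕ) : ℤ) * (p : ℤ) := by
      rw [← Nat.cast_mul, Nat.div_mul_cancel hpd]
    rw [hmeq] at hdvd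
    have hp0 : (p : ℤ) ≠ 0 := by exact_mod_cast hpp.ne_zero
    have hdvd2 : ((m / p : ℕ) : ℤ) ∣ t := (mul_dvd_mul_iff_right hp0).mp hdvd
    obtain ⟨s, hst⟩ := hdvd2
    refine ⟨s, ?_⟩
    simp only
    rw [← ht, hst, zpow_mul, zpow_natCast]
  constructor
  intro n hnmem x
  obtain ⟨s, hs⟩ := hnmem
  simp only at hs
  rw [← hs, ← conj_zpow]
  exact Subgroup.zpow_mem _ (key x) s

lemma structure_lemma {G : Type*} [Group G] [Finite G]
    (Hb : Subgroup G) (hne : Hb ≠ ⊤)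
    (hjoin : ∀ K : Subgroup G, K.Normal → K ≠ ⊥ → Hb ⊔ K = ⊤)
    (hss : IsSupersolvableGroup G) :
    ∃ (p : ℕ), p.Prime ∧ ∃ C : Subgroup (ZMod p)ˣ,
      Nonempty (G ≃* Multiplicative (ZMod p) ⋊[(unitAct p).comp C.subtype] C) := by
  classical
  have hnt : Nontrivial G := by
    by_contra hsub
    rw [not_nontrivial_iff_subsingleton] at hsub
    exact hne ((Subgroup.eq_top_iff' Hb).mpr fun x => (Subsingleton.elim x 1) ▸ Hb.one_mem)
  obtain ⟨p, hpp, b, hob, hBn⟩ := exists_prime_order_normal hss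
  haveI : Fact p.Prime := ⟨hpp⟩
  set B := Subgroup.zpowers b with hBdef
  haveI := hBn
  have hBbot : B ≠ ⊥ := by
    intro hbot
    have : b = 1 := by
      have := Subgroup.mem_zpowers b
      rwa [← hBdef, hbot, Subgroup.mem_bot] at this
    rw [this, orderOf_one] at hob
    exact hpp.one_lt.ne' hob.symm
  have htopB : Hb ⊔ B = ⊤ := hjoin B hBn hBbot
  have hcardB : Nat.card B = p := by rw [hBdef, Nat.card_zpowers, hob]
  -- B ⊓ Hb = ⊥
  have hint : B ⊓ Hb = ⊥ := by
    have hdvd : Nat.card (B ⊓ Hb : Subgroup G) ∣ p :=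
      hcardB ▸ Subgroup.card_dvd_of_le inf_le_left
    rcases (Nat.Prime.eq_one_or_self_of_dvd hpp _ hdvd) with h1 | hpeq
    · exact Subgroup.eq_bot_of_card_eq _ h1
    · exfalso
      have : B ⊓ Hb = B := Subgroup.eq_of_le_of_card_ge inf_le_left (by rw [hcardB, hpeq])
      have hBle : B ≤ Hb := this ▸ inf_le_right
      apply hne
      rwa [sup_eq_left.mpr hBle] at htopB
  -- centralizer of B is normal
  set Z := Subgroup.centralizer (B : Set G) with hZdef
  have hZn : Z.Normal := by
    constructor
    intro z hz x
    rw [hZdef, Subgroup.mem_centralizer_iff]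
    intro y hy
    have hy' : x⁻¹ * y * x ∈ B := by
      have := hBn.conj_mem y hy x⁻¹
      simpa using this
    have hzc : (x⁻¹ * y * x) * z = z * (x⁻¹ * y * x) :=
      Subgroup.mem_centralizer_iff.mp hz _ hy'
    have := congrArg (fun w => x * w * x⁻¹) hzc
    simp only [mul_assoc] at this ⊢
    group at this ⊢
    convert this using 1 <;> group
  -- L = Hb ⊓ Z is normal
  set L := Hb ⊓ Z with hLdef
  have hfix : ∀ y ∈ B, ∀ l ∈ L, y * l * y⁻¹ = l := by
    intro y hy l hl
    have hc : y * l = l * y := Subgroup.mem_centralizer_iff.mp hl.2 y hy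
    rw [hc, mul_inv_cancel_right]
  have hLn : L.Normal := by
    rw [← Subgroup.normalizer_eq_top_iff, eq_top_iff, ← htopB]
    refine sup_le ?_ ?_
    · intro h hh
      rw [Subgroup.mem_normalizer_iff]
      intro x
      constructor
      · intro hx
        exact ⟨Hb.mul_mem (Hb.mul_mem hh hx.1) (Hb.inv_mem hh), hZn.conj_mem x hx.2 h⟩
      · intro hx
        have hxe : x = h⁻¹ * (h * x * h⁻¹) * h⁻¹⁻¹ := by group
        rw [hxe]
        exact ⟨Hb.mul_mem (Hb.mul_mem (Hb.inv_mem hh) hx.1) (Hb.inv_mem (Hb.inv_mem hh)),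
          hZn.conj_mem _ hx.2 h⁻¹⟩
    · intro y hy
      rw [Subgroup.mem_normalizer_iff]
      intro x
      constructor
      · intro hx
        rw [hfix y hy x hx]
        exact hx
      · intro hx
        have h2 := hfix y⁻¹ (B.inv_mem hy) _ hx
        have hxe : x = y⁻¹ * (y * x * y⁻¹) * y⁻¹⁻¹ := by group
        rw [hxe, h2]
        exact hx
  have hL : L = ⊥ := by
    by_contra hLne
    have := hjoin L hLn hLne
    rw [sup_eq_left.mpr (inf_le_left : L ≤ Hb)] at this
    exact hne this
  -- conjugation action
  let χ : Hb →* MulAut B := MulAut.conjNormal.comp Hb.subtype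
  have hχinj : Function.Injective χ := by
    intro h1 h2 hχ
    have : ∀ y : B, (h1 : G) * y * (h1 : G)⁻¹ = (h2 : G) * y * (h2 : G)⁻¹ := by
      intro y
      have := DFunLike.congr_fun hχ y
      have h1' : ((χ h1) y : G) = (h1 : G) * y * (h1 : G)⁻¹ := MulAut.conjNormal_apply _ _
      have h2' : ((χ h2) y : G) = (h2 : G) * y * (h2 : G)⁻¹ := MulAut.conjNormal_apply _ _
      rw [← h1', ← h2', this]
    have hmem : (h2 : G)⁻¹ * (h1 : G) ∈ L := by
      refine Subgroup.mem_inf.mpr ⟨?_, ?_⟩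
      · exact Hb.mul_mem (Hb.inv_mem h2.2) h1.2
      · rw [hZdef, Subgroup.mem_centralizer_iff]
        intro y hy
        have := this ⟨y, hy⟩
        -- h1 y h1⁻¹ = h2 y h2⁻¹  ⇒  y (h2⁻¹ h1) = (h2⁻¹ h1) y
        have h3 : (h2 : G)⁻¹ * ((h1 : G) * y * (h1 : G)⁻¹) * (h2 : G) = y := by
          rw [this]; group
        calc y * ((h2:G)⁻¹ * (h1:G))
            = (h2:G)⁻¹ * ((h2:G) * y * (h2:G)⁻¹) * (h1:G) := by group
          _ = (h2:G)⁻¹ * ((h1:G) * y * (h1:G)⁻¹) * (h1:G) := by rw [← this]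
          _ = ((h2:G)⁻¹ * (h1:G)) * y := by group
    rw [hL, Subgroup.mem_bot] at hmem
    exact Subtype.ext (inv_mul_eq_one.mp hmem).symm
  -- B is cyclic
  haveI hcycB : IsCyclic B := by
    refine ⟨⟨⟨b, Subgroup.mem_zpowers b⟩, ?_⟩⟩
    rintro ⟨x, k, hk⟩
    exact ⟨k, Subtype.ext (by simpa using hk)⟩
  let e1 : Multiplicative (ZMod p) ≃* B := hcardB ▸ zmodCyclicMulEquiv hcycB
  let κ : Hb →* (ZMod p)ˣ :=
    (unitActEquiv p).symm.toMonoidHom.comp ((MulAut.congr e1.symm).toMonoidHom.comp χ)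
  have hκinj : Function.Injective κ :=
    (unitActEquiv p).symm.injective.comp ((MulAut.congr e1.symm).injective.comp hχinj)
  set C := κ.range with hCdef
  let ρ : Hb ≃* C := MonoidHom.ofInjective hκinj
  let φ : C →* MulAut (Multiplicative (ZMod p)) := (unitAct p).comp C.subtype
  let fB : Multiplicative (ZMod p) →* G := B.subtype.comp e1.toMonoidHom
  let fC : C →* G := Hb.subtype.comp ρ.symm.toMonoidHom
  have compat : ∀ c : C, fB.comp (φ c).toMonoidHom = (MulAut.conj (fC c)).toMonoidHom.comp fB := by
    intro c
    ext a
    have hc : κ (ρ.symm c) = (c : (ZMod p)ˣ) := by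
      rw [← MonoidHom.ofInjective_apply hκinj]
      exact congrArg Subtype.val (ρ.apply_symm_apply c)
    have hact : unitAct p (c : (ZMod p)ˣ) = (MulAut.congr e1.symm) (χ (ρ.symm c)) := by
      rw [← hc]
      exact unitActEquiv_symm_spec p _
    show fB ((unitAct p (C.subtype c)) a) = (MulAut.conj (fC c)) (fB a)
    rw [show C.subtype c = (c : (ZMod p)ˣ) from rfl, hact]
    rw [MulAut.congr_apply]
    show (B.subtype (e1 (e1.symm ((χ (ρ.symm c)) (e1.symm.symm a)))) : G)
       = (MulAut.conj (fC c)) (fB a)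
    rw [e1.apply_symm_apply]
    have h1 : ((χ (ρ.symm c)) (e1.symm.symm a) : G)
        = (ρ.symm c : G) * (e1.symm.symm a : B) * (ρ.symm c : G)⁻¹ :=
      MulAut.conjNormal_apply _ _
    exact h1
  let Φ := SemidirectProduct.lift fB fC compat
  have hΦinj : Function.Injective Φ := by
    rw [injective_iff_map_eq_one]
    intro x hx
    have hx' : fB x.left * fC x.right = 1 := hx
    have hmemB : fB x.left ∈ B := (e1 x.left).2
    have hmemH : fC x.right ∈ Hb := (ρ.symm x.right).2
    have heq : fB x.left = (fC x.right)⁻¹ := eq_inv_of_mul_eq_one_left hx'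
    have hmem : fB x.left ∈ B ⊓ Hb :=
      Subgroup.mem_inf.mpr ⟨hmemB, heq ▸ Hb.inv_mem hmemH⟩
    rw [hint, Subgroup.mem_bot] at hmem
    have hleft : x.left = 1 := by
      have : e1 x.left = 1 := Subtype.ext hmem
      exact e1.injective (by rw [this, map_one])
    have hright : x.right = 1 := by
      have h2 : fC x.right = 1 := by
        have hx2 := hx'
        rw [hmem, one_mul] at hx2
        exact hx2
      have : ρ.symm x.right = 1 := Subtype.ext h2
      exact ρ.symm.injective (by rw [this, map_one])
    exact SemidirectProduct.ext hleft hright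
  have hΦsurj : Function.Surjective Φ := by
    rw [← MonoidHom.range_eq_top]
    rw [eq_top_iff, ← htopB]
    refine sup_le ?_ ?_
    · intro h hh
      refine ⟨SemidirectProduct.inr (ρ ⟨h, hh⟩), ?_⟩
      rw [show Φ = SemidirectProduct.lift fB fC compat from rfl, SemidirectProduct.lift_inr]
      show (Hb.subtype (ρ.symm (ρ ⟨h, hh⟩)) : G) = h
      rw [ρ.symm_apply_apply]
      rfl
    · intro x hx
      refine ⟨SemidirectProduct.inl (e1.symm ⟨x, hx⟩), ?_⟩
      rw [show Φ = SemidirectProduct.lift fB fC compat from rfl, SemidirectProduct.lift_inl]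
      show (B.subtype (e1 (e1.symm ⟨x, hx⟩)) : G) = x
      rw [e1.apply_symm_apply]
      rfl
  exact ⟨p, hpp, C, ⟨(MulEquiv.ofBijective Φ ⟨hΦinj, hΦsurj⟩).symm⟩⟩

/-- A finitely generated subgroup `H` of a free group `F` is dense in the
pro-(supersolvable) topology iff `HN = F` for every normal `N` of `F` with
`F/N ≅ (ℤ/pℤ) ⋊ C`, `p` prime, `C ≤ Aut(ℤ/pℤ)`. -/
theorem stmt7 {ι : Type*} (H : Subgroup (FreeGroup ι)) (hH : H.FG) :
    (∀ (N : Subgroup (FreeGroup ι)) [N.Normal],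
        Finite (FreeGroup ι ⧸ N) → IsSupersolvableGroup (FreeGroup ι ⧸ N) → H ⊔ N = ⊤) ↔
      (∀ (p : ℕ), p.Prime → ∀ (N : Subgroup (FreeGroup ι)) [N.Normal],
        (∃ C : Subgroup (ZMod p)ˣ,
          Nonempty ((FreeGroup ι ⧸ N) ≃*
            Multiplicative (ZMod p) ⋊[(unitAct p).comp C.subtype] C)) →
        H ⊔ N = ⊤) := by
  constructor
  · intro hsu p hpp N hN hex
    haveI := hN
    obtain ⟨C, ⟨e⟩⟩ := hex
    haveI : Fact p.Prime := ⟨hpp⟩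
    haveI hfin : Finite (FreeGroup ι ⧸ N) := Finite.of_equiv _ e.symm.toEquiv
    have hss := (sdp_supersolvable ((unitAct p).comp C.subtype)).of_mulEquiv e.symm
    exact hsu N hfin hss
  · intro hp
    have main : ∀ n : ℕ, ∀ N : Subgroup (FreeGroup ι), ∀ _ : N.Normal,
        ∀ _ : Finite (FreeGroup ι ⧸ N), Nat.card (FreeGroup ι ⧸ N) = n →
        IsSupersolvableGroup (FreeGroup ι ⧸ N) → H ⊔ N = ⊤ := by
      intro n
      induction n using Nat.strong_induction_on with
      | _ n ih =>
        intro N hN hfin hcard hss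
        haveI := hN
        haveI := hfin
        set Q := QuotientGroup.mk' N with hQdef
        have hQsurj : Function.Surjective Q := QuotientGroup.mk'_surjective N
        set Hb := H.map Q with hHbdef
        by_cases htop : Hb = ⊤
        · have h1 : Subgroup.comap Q (Subgroup.map Q H) = H ⊔ Q.ker := Subgroup.comap_map_eq Q H
          rw [← hHbdef, htop, Subgroup.comap_top, QuotientGroup.ker_mk'] at h1
          exact h1.symm
        · have hjoin : ∀ K : Subgroup (FreeGroup ι ⧸ N), K.Normal → K ≠ ⊥ → Hb ⊔ K = ⊤ := by
            intro K hKn hKbot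
            haveI := hKn
            set N' := K.comap Q with hN'def
            have hN'n : N'.Normal := hKn.comap Q
            set f : FreeGroup ι →* (FreeGroup ι ⧸ N) ⧸ K := (QuotientGroup.mk' K).comp Q with hfdef
            have hfsurj : Function.Surjective f :=
              (QuotientGroup.mk'_surjective K).comp hQsurj
            have hker : f.ker = N' := by
              rw [hfdef, ← MonoidHom.comap_ker, QuotientGroup.ker_mk']
            let e : (FreeGroup ι ⧸ N') ≃* ((FreeGroup ι ⧸ N) ⧸ K) :=
              (QuotientGroup.quotientMulEquivOfEq hker.symm).trans
                (QuotientGroup.quotientKerEquivOfSurjective f hfsurj)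
            haveI hfinQK : Finite ((FreeGroup ι ⧸ N) ⧸ K) := Quotient.finite _
            haveI : Finite (FreeGroup ι ⧸ N') := Finite.of_equiv _ e.symm.toEquiv
            have hcard' : Nat.card (FreeGroup ι ⧸ N') < n := by
              rw [Nat.card_congr e.toEquiv, ← hcard,
                Subgroup.card_eq_card_quotient_mul_card_subgroup K]
              have hK2 : 1 < Nat.card K := (Subgroup.one_lt_card_iff_ne_bot K).mpr hKbot
              have hpos : 0 < Nat.card ((FreeGroup ι ⧸ N) ⧸ K) := Nat.card_pos
              calc Nat.card ((FreeGroup ι ⧸ N) ⧸ K)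
                  = Nat.card ((FreeGroup ι ⧸ N) ⧸ K) * 1 := (mul_one _).symm
                _ < Nat.card ((FreeGroup ι ⧸ N) ⧸ K) * Nat.card K := by
                    exact Nat.mul_lt_mul_of_le_of_lt le_rfl hK2 hpos
            have hss' : IsSupersolvableGroup (FreeGroup ι ⧸ N') :=
              (hss.of_surjective (QuotientGroup.mk' K)
                (QuotientGroup.mk'_surjective K)).of_mulEquiv e.symm
            have hHN' : H ⊔ N' = ⊤ := ih _ hcard' N' hN'n inferInstance rfl hss'
            have := congrArg (Subgroup.map Q) hHN'
            rw [Subgroup.map_sup, Subgroup.map_top_of_surjective _ hQsurj, hN'def,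
              Subgroup.map_comap_eq_self_of_surjective hQsurj] at this
            exact this
          obtain ⟨p, hpp, C, ⟨e⟩⟩ := structure_lemma Hb htop hjoin hss
          exact hp p hpp N ⟨C, ⟨e⟩⟩
    intro N hN hfin hss
    haveI := hN
    exact main _ N hN hfin rfl hss
end

section
/- Fix a prime p and an integer d ≥ 2. Let G = V_{d-1} ⋊_α C be a p-hypersolvable group with C nontrivial of order c. Write each g ∈ G uniquely as g = v(g) x^{c(g)} with v(g) ∈ V_{d-1} and 0 ≤ c(g) ≤ c−1. A subset Z = {g_1,...,g_d} of cardinality d generates G if and only if: (i) lcm{ c / gcd(c, c(g_i)) : c(g_i) ≠ 0 } = c, and (ii) the commutators [g_i, g_j] for g_i, g_j ∈ Z span V_{d-1} as a ℤ/pℤ-vector space. -/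
/-- The diagonal (scalar) action of `(ℤ/pℤ)ˣ` on `(ℤ/pℤ)^n`. -/
def diagAct (p n : ℕ) : (ZMod p)ˣ →* MulAut (Multiplicative (Fin n → ZMod p)) :=
  (addAutToMulAut _).comp (DistribMulAction.toAddAut (ZMod p)ˣ (Fin n → ZMod p))

/-- The `p`-hypersolvable group `V_n ⋊_α C` where `C ≤ (ℤ/pℤ)ˣ` acts diagonally. -/
abbrev Hyp (p n : ℕ) (C : Subgroup (ZMod p)ˣ) :=
  Multiplicative (Fin n → ZMod p) ⋊[(diagAct p n).comp C.subtype] C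

lemma commute_of_closure_eq_top {M : Type*} [Group M] {S : Set M}
    (hS : ∀ x ∈ S, ∀ y ∈ S, Commute x y) (h : Subgroup.closure S = ⊤) (a b : M) :
    Commute a b := by
  have ha : a ∈ Subgroup.closure S := h.symm ▸ Subgroup.mem_top a
  have hb : b ∈ Subgroup.closure S := h.symm ▸ Subgroup.mem_top b
  exact Subgroup.closure_induction₂ (p := fun x y _ _ => Commute x y)
    (fun x y hx hy => hS x hx y hy)
    (fun x _ => Commute.one_left x) (fun x _ => Commute.one_right x)
    (fun x y z _ _ _ hxz hyz => hxz.mul_left hyz)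
    (fun y z x _ _ _ hxy hxz => hxy.mul_right hxz)
    (fun x y _ _ hxy => hxy.inv_left)
    (fun x y _ _ hxy => hxy.inv_right) ha hb

lemma cyclic_gen_iff_lcm {M : Type*} [Group M] [Finite M] {ι : Type*} [Fintype ι]
    (a : M) (c : ℕ) (hc : orderOf a = c) (k : ι → ℕ) :
    Subgroup.closure (Set.range fun i => a ^ k i) = Subgroup.zpowers a ↔
      (Finset.univ.filter fun i => k i ≠ 0).lcm (fun i => c / Nat.gcd c (k i)) = c := by
  classical
  set L : ℕ := (Finset.univ.filter fun i => k i ≠ 0).lcm (fun i => c / Nat.gcd c (k i)) with hLdef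
  constructor
  · intro h
    refine Nat.dvd_antisymm (Finset.lcm_dvd fun i _ =>
      ⟨Nat.gcd c (k i), (Nat.div_mul_cancel (Nat.gcd_dvd_left _ _)).symm⟩) ?_
    let K : Subgroup M :=
      { carrier := {x | x ∈ Subgroup.zpowers a ∧ x ^ L = 1}
        one_mem' := ⟨one_mem _, one_pow _⟩
        mul_mem' := by
          rintro x y ⟨hx1, hx2⟩ ⟨hy1, hy2⟩
          have hcomm : Commute x y := by
            obtain ⟨m, rfl⟩ := hx1
            obtain ⟨n, rfl⟩ := hy1
            exact Commute.zpow_zpow_self a m n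
          exact ⟨mul_mem hx1 hy1, by rw [hcomm.mul_pow, hx2, hy2, one_mul]⟩
        inv_mem' := by
          rintro x ⟨hx1, hx2⟩
          exact ⟨inv_mem hx1, by rw [inv_pow, hx2, inv_one]⟩ }
    have hle : Subgroup.closure (Set.range fun i => a ^ k i) ≤ K := by
      rw [Subgroup.closure_le]
      rintro _ ⟨i, rfl⟩
      refine ⟨⟨(k i : ℤ), by simp⟩, ?_⟩
      by_cases hki : k i = 0
      · simp [hki]
      · rw [← orderOf_dvd_iff_pow_eq_one, orderOf_pow' a hki, hc]
        exact Finset.dvd_lcm (Finset.mem_filter.mpr ⟨Finset.mem_univ i, hki⟩)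
    have haK : a ∈ K := hle (h.symm ▸ Subgroup.mem_zpowers a)
    have := orderOf_dvd_iff_pow_eq_one.mpr haK.2
    rwa [hc] at this
  · intro hL
    have hsub : Subgroup.closure (Set.range fun i => a ^ k i) ≤ Subgroup.zpowers a := by
      rw [Subgroup.closure_le]
      rintro _ ⟨i, rfl⟩
      exact ⟨(k i : ℤ), by simp⟩
    set D := Subgroup.closure (Set.range fun i => a ^ k i) with hD
    set Z := Subgroup.zpowers a with hZ
    let D' := D.subgroupOf Z
    have hdvd : ∀ i ∈ (Finset.univ.filter fun i => k i ≠ 0),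
        c / Nat.gcd c (k i) ∣ Nat.card D' := by
      intro i hi
      have hki : k i ≠ 0 := (Finset.mem_filter.mp hi).2
      have hmemZ : a ^ k i ∈ Z := ⟨(k i : ℤ), by simp⟩
      have hmemD' : (⟨a ^ k i, hmemZ⟩ : Z) ∈ D' :=
        Subgroup.mem_subgroupOf.mpr (Subgroup.subset_closure ⟨i, rfl⟩)
      have h1 : orderOf (⟨⟨a ^ k i, hmemZ⟩, hmemD'⟩ : D') ∣ Nat.card D' :=
        orderOf_dvd_natCard _
      rwa [Subgroup.orderOf_mk, Subgroup.orderOf_mk, orderOf_pow' a hki, hc] at h1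
    have h1 : c ∣ Nat.card D' := hL ▸ Finset.lcm_dvd hdvd
    have h2 : Nat.card D' ∣ Nat.card Z := Subgroup.card_subgroup_dvd_card D'
    have h3 : Nat.card Z = c := hc ▸ Nat.card_zpowers a
    have hcards : Nat.card D' = Nat.card Z := Nat.dvd_antisymm h2 (h3 ▸ h1)
    have : D' = ⊤ := Subgroup.eq_top_of_card_eq D' hcards
    exact le_antisymm hsub (Subgroup.subgroupOf_eq_top.mp this)

lemma phi_apply {p n : ℕ} {C : Subgroup (ZMod p)ˣ} (z : ↥C)
    (m : Multiplicative (Fin n → ZMod p)) :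
    ((diagAct p n).comp C.subtype) z m =
      Multiplicative.ofAdd ((z : (ZMod p)ˣ) • Multiplicative.toAdd m) := rfl

lemma diagAct_apply {p n : ℕ} (u : (ZMod p)ˣ) (w : Fin n → ZMod p) :
    (diagAct p n u) (Multiplicative.ofAdd w) = Multiplicative.ofAdd (u • w) := rfl

open scoped commutatorElement

/-- Generation criterion for a `d`-element subset `{g₁,…,g_d}` of `G = V_{d-1} ⋊_α C`
with `C = ⟨α⟩` nontrivial of order `c`, where `gᵢ = vᵢ x^{kᵢ}` with `0 ≤ kᵢ ≤ c-1`: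
the set generates `G` iff (i) `lcm { c / gcd(c,kᵢ) : kᵢ ≠ 0 } = c`, and
(ii) the commutators `[gᵢ,gⱼ]` span `V_{d-1}` over `ℤ/pℤ`. -/
theorem stmt13 (p d : ℕ) (hp : p.Prime) (hd : 2 ≤ d) (α : (ZMod p)ˣ) (c : ℕ)
    (hc : orderOf α = c) (hα : α ≠ 1)
    (v : Fin d → (Fin (d - 1) → ZMod p)) (k : Fin d → ℕ) (hk : ∀ i, k i ≤ c - 1)
    (g : Fin d → Hyp p (d - 1) (Subgroup.zpowers α))
    (hg : ∀ i, g i = ⟨Multiplicative.ofAdd (v i), ⟨α, Subgroup.mem_zpowers α⟩ ^ (k i)⟩)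
    (hinj : Function.Injective g) :
    Subgroup.closure (Set.range g) = ⊤ ↔
      ((Finset.univ.filter fun i => k i ≠ 0).lcm (fun i => c / Nat.gcd c (k i)) = c ∧
        Submodule.span (ZMod p)
          {w : Fin (d - 1) → ZMod p | ∃ i j,
            g i * g j * (g i)⁻¹ * (g j)⁻¹ = ⟨Multiplicative.ofAdd w, 1⟩} = ⊤) := by
  haveI : Fact p.Prime := ⟨hp⟩
  haveI : NeZero p := ⟨hp.pos.ne'⟩
  set b : ↥(Subgroup.zpowers α) := ⟨α, Subgroup.mem_zpowers α⟩ with hbdef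
  have hbo : orderOf b = c := by rw [← hc]; exact (Subgroup.orderOf_mk α _)
  have hbtop : Subgroup.zpowers b = (⊤ : Subgroup ↥(Subgroup.zpowers α)) := by
    rw [Subgroup.eq_top_iff']
    intro x
    obtain ⟨m, hm⟩ := Subgroup.mem_zpowers_iff.mp x.2
    exact Subgroup.mem_zpowers_iff.mpr ⟨m, Subtype.ext (by simpa using hm)⟩
  have hP1 := cyclic_gen_iff_lcm b c hbo k
  set S : Set (Fin (d - 1) → ZMod p) :=
    {w | ∃ i j, g i * g j * (g i)⁻¹ * (g j)⁻¹ = ⟨Multiplicative.ofAdd w, 1⟩} with hSdef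
  set W := Submodule.span (ZMod p) S with hWdef
  set π : Hyp p (d - 1) (Subgroup.zpowers α) →* ↥(Subgroup.zpowers α) := SemidirectProduct.rightHom with hπ
  constructor
  · intro h
    -- part (i)
    have hi : (Finset.univ.filter fun i => k i ≠ 0).lcm (fun i => c / Nat.gcd c (k i)) = c := by
      rw [← hP1, hbtop]
      have hmap := congrArg (Subgroup.map π) h
      rw [Subgroup.map_top_of_surjective π SemidirectProduct.rightHom_surjective,
        MonoidHom.map_closure π _, ← Set.range_comp] at hmap
      have hr : (π ∘ g) = fun i => b ^ k i := by
        funext i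
        rw [Function.comp_apply, hg i]
        rfl
      rwa [hr] at hmap
    refine ⟨hi, ?_⟩
    -- part (ii)
    let N : Subgroup (Hyp p (d - 1) (Subgroup.zpowers α)) :=
      { carrier := {x | x.right = 1 ∧ Multiplicative.toAdd x.left ∈ W}
        one_mem' := ⟨rfl, by simpa using W.zero_mem⟩
        mul_mem' := by
          rintro x y ⟨hx1, hx2⟩ ⟨hy1, hy2⟩
          constructor
          · simp [hx1, hy1]
          · rw [SemidirectProduct.mul_left, hx1]
            simpa using W.add_mem hx2 hy2
        inv_mem' := by
          rintro x ⟨hx1, hx2⟩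
          constructor
          · simp [hx1]
          · rw [SemidirectProduct.inv_left, hx1]
            simpa using W.neg_mem hx2 }
    haveI hN : N.Normal := by
      constructor
      intro x hx u
      obtain ⟨hx1, hx2⟩ := hx
      constructor
      · simp [SemidirectProduct.mul_right, hx1]
      · have : (u * x * u⁻¹).left =
            ((diagAct p (d - 1)).comp (Subgroup.zpowers α).subtype) u.right x.left := by
          simp [SemidirectProduct.mul_left, SemidirectProduct.inv_left,
            SemidirectProduct.mul_right, hx1, mul_comm]
        rw [this, phi_apply, toAdd_ofAdd, Units.smul_def]
        exact W.smul_mem _ hx2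
    -- commutators of the generators lie in N
    have hcommN : ∀ i j, g i * g j * (g i)⁻¹ * (g j)⁻¹ ∈ N := by
      intro i j
      have hright : (g i * g j * (g i)⁻¹ * (g j)⁻¹).right = 1 := by
        simp [mul_comm]
      refine ⟨hright, ?_⟩
      refine Submodule.subset_span ⟨i, j, ?_⟩
      ext
      · simp
      · simpa using hright
    set Q := Hyp p (d - 1) (Subgroup.zpowers α) ⧸ N with hQ
    set q : Hyp p (d - 1) (Subgroup.zpowers α) →* Q := QuotientGroup.mk' N with hq
    have habel : ∀ x y : Q, Commute x y := by
      refine commute_of_closure_eq_top (S := Set.range (q ∘ g)) ?_ ?_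
      · rintro _ ⟨i, rfl⟩ _ ⟨j, rfl⟩
        have h1 : ⁅q (g i), q (g j)⁆ = 1 := by
          rw [← map_commutatorElement]
          exact (QuotientGroup.eq_one_iff _).mpr (hcommN i j)
        exact commutatorElement_eq_one_iff_commute.mp h1
      · have hmap := congrArg (Subgroup.map q) h
        rwa [Subgroup.map_top_of_surjective q (QuotientGroup.mk'_surjective N),
          MonoidHom.map_closure q _, ← Set.range_comp] at hmap
    -- conclude W = ⊤
    rw [eq_top_iff]
    intro w _
    have hcom := habel (q (SemidirectProduct.inl (Multiplicative.ofAdd w)))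
      (q (SemidirectProduct.inr b))
    set a1 : Hyp p (d - 1) (Subgroup.zpowers α) := SemidirectProduct.inl (Multiplicative.ofAdd w)
    set a2 : Hyp p (d - 1) (Subgroup.zpowers α) := SemidirectProduct.inr b
    have hmemN : a1 * a2 * a1⁻¹ * a2⁻¹ ∈ N := by
      have h1 : q (a1 * a2 * a1⁻¹ * a2⁻¹) = 1 := by
        rw [show a1 * a2 * a1⁻¹ * a2⁻¹ = ⁅a1, a2⁆ from rfl, map_commutatorElement]
        exact commutatorElement_eq_one_iff_commute.mpr hcom
      exact (QuotientGroup.eq_one_iff _).mp h1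
    have hleft : Multiplicative.toAdd ((a1 * a2 * a1⁻¹ * a2⁻¹).left) = w - (α : ZMod p) • w := by
      simp [a1, a2, SemidirectProduct.mul_left, SemidirectProduct.inv_left,
        SemidirectProduct.mul_right, SemidirectProduct.inv_right, phi_apply, diagAct_apply,
        Units.smul_def, sub_eq_add_neg, hbdef]
    have hsub : w - (α : ZMod p) • w ∈ W := hleft ▸ hmemN.2
    have hne : (1 : ZMod p) - (α : ZMod p) ≠ 0 := by
      intro hcontra
      apply hα
      ext
      rw [sub_eq_zero] at hcontra
      exact hcontra.symm
    have : ((1 : ZMod p) - (α : ZMod p)) • w ∈ W := by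
      rwa [sub_smul, one_smul]
    have := W.smul_mem ((1 - (α : ZMod p))⁻¹) this
    rwa [smul_smul, inv_mul_cancel₀ hne, one_smul] at this
  · rintro ⟨h1, h2⟩
    have hA : ∀ w : Fin (d - 1) → ZMod p,
        SemidirectProduct.inl (Multiplicative.ofAdd w) ∈ Subgroup.closure (Set.range g) := by
      intro w
      have hw : w ∈ W := h2.symm ▸ Submodule.mem_top
      refine Submodule.span_induction ?_ ?_ ?_ ?_ hw
      · rintro x ⟨i, j, hij⟩
        have : (⟨Multiplicative.ofAdd x, 1⟩ : Hyp p (d - 1) (Subgroup.zpowers α)) =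
            SemidirectProduct.inl (Multiplicative.ofAdd x) := rfl
        rw [← this, ← hij]
        have hgi := Subgroup.subset_closure (Set.mem_range_self (f := g) i)
        have hgj := Subgroup.subset_closure (Set.mem_range_self (f := g) j)
        exact mul_mem (mul_mem (mul_mem hgi hgj) (inv_mem hgi)) (inv_mem hgj)
      · simpa using (Subgroup.closure (Set.range g)).one_mem
      · intro x y _ _ hx hy
        rw [show Multiplicative.ofAdd (x + y) =
          Multiplicative.ofAdd x * Multiplicative.ofAdd y from rfl, map_mul]
        exact mul_mem hx hy
      · intro r x _ hx
        have hr : r • x = r.val • x := by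
          conv_lhs => rw [show r = ((r.val : ℕ) : ZMod p) by simp [ZMod.natCast_val, ZMod.cast_id]]
          rw [Nat.cast_smul_eq_nsmul]
        rw [hr, show Multiplicative.ofAdd (r.val • x) =
          (Multiplicative.ofAdd x) ^ r.val from rfl, map_pow]
        exact pow_mem hx _
    have hB : ∀ y : ↥(Subgroup.zpowers α), SemidirectProduct.inr y ∈ Subgroup.closure (Set.range g) := by
      intro y
      have hy : y ∈ Subgroup.closure (Set.range fun i => b ^ k i) := by
        rw [hP1.mpr h1, hbtop]; trivial
      refine Subgroup.closure_induction (p := fun y _ =>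
        SemidirectProduct.inr y ∈ Subgroup.closure (Set.range g)) ?_ ?_ ?_ ?_ hy
      · rintro _ ⟨i, rfl⟩
        have : SemidirectProduct.inr (b ^ k i) =
            (SemidirectProduct.inl (Multiplicative.ofAdd (v i)))⁻¹ * g i := by
          rw [hg i, SemidirectProduct.mk_eq_inl_mul_inr, inv_mul_cancel_left]
        rw [this]
        exact mul_mem (inv_mem (hA _)) (Subgroup.subset_closure ⟨i, rfl⟩)
      · simpa using (Subgroup.closure (Set.range g)).one_mem
      · intro x y _ _ hx hy
        rw [map_mul]; exact mul_mem hx hy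
      · intro x _ hx
        rw [map_inv]; exact inv_mem hx
    rw [eq_top_iff]
    intro x _
    rw [← SemidirectProduct.inl_left_mul_inr_right x]
    exact mul_mem (by simpa using hA (Multiplicative.toAdd x.left)) (hB _)
end

section
/- Fix a prime p and a p-hypersolvable group G = V_n ⋊_α C with C ≠ 1. Then the minimal number of generators of G is d(G) = n + 1. (If C = 1, then d(G) = n.) -/
lemma toAdd_phi (p n : ℕ) (C : Subgroup (ZMod p)ˣ) (c : C) (w : Multiplicative (Fin n → ZMod p)) :
    Multiplicative.toAdd (((diagAct p n).comp C.subtype c) w)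
      = ((c : (ZMod p)ˣ) : ZMod p) • Multiplicative.toAdd w := rfl

/-- subgroup of elements whose left part lies in a submodule `W`. -/
def Kgrp (p n : ℕ) (C : Subgroup (ZMod p)ˣ) (W : Submodule (ZMod p) (Fin n → ZMod p)) :
    Subgroup (Hyp p n C) where
  carrier := {g | Multiplicative.toAdd g.left ∈ W}
  one_mem' := by
    show Multiplicative.toAdd (1 : Hyp p n C).left ∈ W
    simp
  mul_mem' := by
    intro a b ha hb
    show Multiplicative.toAdd (a * b).left ∈ W
    rw [SemidirectProduct.mul_left, toAdd_mul, toAdd_phi]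
    exact W.add_mem ha (W.smul_mem _ hb)
  inv_mem' := by
    intro a ha
    show Multiplicative.toAdd a⁻¹.left ∈ W
    rw [SemidirectProduct.inv_left, toAdd_phi, toAdd_inv]
    exact W.smul_mem _ (W.neg_mem ha)

lemma conj_left (p n : ℕ) (C : Subgroup (ZMod p)ˣ) (u : Fin n → ZMod p) (g : Hyp p n C) :
    Multiplicative.toAdd ((MulAut.conj (SemidirectProduct.inl (Multiplicative.ofAdd u)) g).left)
      = u + Multiplicative.toAdd g.left - (((g.right : (ZMod p)ˣ) : ZMod p)) • u := by
  have : (MulAut.conj (SemidirectProduct.inl (Multiplicative.ofAdd u) : Hyp p n C) g)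
      = SemidirectProduct.inl (Multiplicative.ofAdd u) * g *
        SemidirectProduct.inl (Multiplicative.ofAdd u)⁻¹ := by
    rw [MulAut.conj_apply, map_inv]
  rw [this]
  simp only [SemidirectProduct.mul_left, SemidirectProduct.mul_right, SemidirectProduct.left_inl,
    SemidirectProduct.right_inl, map_one, one_mul, MulAut.one_apply, toAdd_mul, toAdd_phi,
    toAdd_inv, toAdd_ofAdd, smul_neg]
  abel

lemma gen_V (p n : ℕ) [NeZero p] (v : Multiplicative (Fin n → ZMod p)) :
    v ∈ Subgroup.closure
      (Set.range fun i : Fin n => (Multiplicative.ofAdd (Pi.single i (1 : ZMod p)))) := by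
  have hv : v = ∏ i : Fin n,
      (Multiplicative.ofAdd (Pi.single i (1 : ZMod p))) ^ ((Multiplicative.toAdd v i).val) := by
    apply Multiplicative.toAdd.injective
    rw [toAdd_prod]
    simp only [toAdd_pow, toAdd_ofAdd]
    have : ∀ i : Fin n, (Multiplicative.toAdd v i).val •
          (Pi.single i (1 : ZMod p) : Fin n → ZMod p)
        = (Pi.single i (Multiplicative.toAdd v i) : Fin n → ZMod p) := by
      intro i
      rw [← Pi.single_smul, nsmul_eq_mul, mul_one, ZMod.natCast_val, ZMod.cast_id]
    simp_rw [this]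
    rw [Finset.univ_sum_single]
  rw [hv]
  refine Subgroup.prod_mem _ fun i _ => Subgroup.pow_mem _ (Subgroup.subset_closure ?_) _
  exact Set.mem_range_self i


/-- If `G = V_n ⋊_α C` is a `p`-hypersolvable group with `C = ⟨α⟩ ≠ 1`, then the minimal
number of generators of `G` is `n + 1`: there is a generating set of size `n + 1` and no
smaller one. -/
theorem stmt14 (p n : ℕ) (hp : p.Prime) (hn : 0 < n) (α : (ZMod p)ˣ) (hα : α ≠ 1) :
    (∃ S : Finset (Hyp p n (Subgroup.zpowers α)),
        S.card = n + 1 ∧ Subgroup.closure (S : Set (Hyp p n (Subgroup.zpowers α))) = ⊤) ∧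
      (∀ S : Finset (Hyp p n (Subgroup.zpowers α)),
        Subgroup.closure (S : Set (Hyp p n (Subgroup.zpowers α))) = ⊤ →
          n + 1 ≤ S.card) := by
  haveI : Fact p.Prime := ⟨hp⟩
  set C := Subgroup.zpowers α with hC
  let a : C := ⟨α, Subgroup.mem_zpowers α⟩
  have ha1 : a ≠ 1 := fun h => hα (congrArg Subtype.val h)
  constructor
  · -- upper bound
    let e : Fin n → Hyp p n C := fun i =>
      SemidirectProduct.inl (Multiplicative.ofAdd (Pi.single i (1 : ZMod p)))
    have he : Function.Injective e := by
      intro i j h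
      by_contra hij
      have h2 : (Pi.single i (1 : ZMod p) : Fin n → ZMod p) = Pi.single j 1 := by
        have := congrArg (fun g : Hyp p n C => Multiplicative.toAdd g.left) h
        simpa [e] using this
      have hji : j ≠ i := Ne.symm hij
      have := congrFun h2 i
      rw [Pi.single_eq_same] at this
      exact one_ne_zero (this.trans (Pi.single_eq_of_ne hij 1))
    refine ⟨insert (SemidirectProduct.inr a) (Finset.image e Finset.univ), ?_, ?_⟩
    · rw [Finset.card_insert_of_notMem, Finset.card_image_of_injective _ he,
        Finset.card_univ, Fintype.card_fin]
      intro hmem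
      obtain ⟨i, _, hi⟩ := Finset.mem_image.1 hmem
      apply ha1
      have := congrArg (fun g : Hyp p n C => g.right) hi
      simpa [e] using this.symm
    · rw [Subgroup.eq_top_iff']
      intro g
      rw [← SemidirectProduct.inl_left_mul_inr_right g]
      set S : Finset (Hyp p n C) := insert (SemidirectProduct.inr a) (Finset.image e Finset.univ)
      apply Subgroup.mul_mem
      · -- inl part
        have hv := gen_V p n g.left
        have : SemidirectProduct.inl (φ := (diagAct p n).comp C.subtype) g.left ∈
            Subgroup.map SemidirectProduct.inl (Subgroup.closure
              (Set.range fun i : Fin n => (Multiplicative.ofAdd (Pi.single i (1 : ZMod p))))) :=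
          Subgroup.mem_map_of_mem _ hv
        rw [MonoidHom.map_closure] at this
        refine Subgroup.closure_mono ?_ this
        rintro x ⟨y, ⟨i, rfl⟩, rfl⟩
        exact Finset.mem_coe.2 (Finset.mem_insert_of_mem
          (Finset.mem_image.2 ⟨i, Finset.mem_univ i, rfl⟩))
      · -- inr part
        obtain ⟨k, hk⟩ := g.right.2
        have : g.right = a ^ k := by
          apply Subtype.ext
          rw [← hk]
          rfl
        rw [this, map_zpow]
        exact Subgroup.zpow_mem _ (Subgroup.subset_closure
          (Finset.mem_coe.2 (Finset.mem_insert_self _ _))) k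
  · -- lower bound
    intro S hS
    by_contra hlt
    have hcard : S.card ≤ n := by omega
    -- find a generator with nontrivial right component
    have hex : ∃ s ∈ S, s.right ≠ 1 := by
      by_contra hall
      push_neg at hall
      have h1 : Subgroup.map (SemidirectProduct.rightHom) (Subgroup.closure (S : Set (Hyp p n C)))
          ≤ ⊥ := by
        rw [MonoidHom.map_closure]
        rw [Subgroup.closure_le]
        rintro x ⟨s, hs, rfl⟩
        simp only [SetLike.mem_coe, Subgroup.mem_bot]
        exact hall s hs
      rw [hS, Subgroup.map_top_of_surjective _ SemidirectProduct.rightHom_surjective] at h1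
      exact ha1 (Subgroup.mem_bot.1 (h1 (Subgroup.mem_top a)))
    obtain ⟨s₀, hs₀S, hs₀⟩ := hex
    set c : ZMod p := ((s₀.right : (ZMod p)ˣ) : ZMod p) with hcdef
    have hc1 : c ≠ 1 := by
      intro h
      exact hs₀ (Subtype.ext (Units.ext h))
    have hc0 : c - 1 ≠ 0 := sub_ne_zero.2 hc1
    set v₀ : Fin n → ZMod p := Multiplicative.toAdd s₀.left with hv₀
    set u : Fin n → ZMod p := (c - 1)⁻¹ • v₀ with hu
    set g₀ : Hyp p n C := SemidirectProduct.inl (Multiplicative.ofAdd u) with hg₀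
    set h : Hyp p n C → (Fin n → ZMod p) := fun g => Multiplicative.toAdd ((MulAut.conj g₀ g).left)
      with hh
    set W : Submodule (ZMod p) (Fin n → ZMod p) := Submodule.span (ZMod p) (h '' ↑S) with hW
    -- the conjugated generators generate everything
    have htop : Subgroup.closure ((MulAut.conj g₀) '' (S : Set (Hyp p n C))) = ⊤ := by
      have := MonoidHom.map_closure (MulAut.conj g₀).toMonoidHom (S : Set (Hyp p n C))
      rw [hS, Subgroup.map_top_of_surjective _ (MulAut.conj g₀).surjective] at this
      exact this.symm
    -- they all lie in Kgrp W
    have hKtop : (Kgrp p n C W : Subgroup (Hyp p n C)) = ⊤ := by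
      rw [eq_top_iff, ← htop, Subgroup.closure_le]
      rintro x ⟨s, hs, rfl⟩
      show Multiplicative.toAdd ((MulAut.conj g₀ s).left) ∈ W
      exact Submodule.subset_span ⟨s, hs, rfl⟩
    -- hence W = ⊤
    have hWtop : ∀ v : Fin n → ZMod p, v ∈ W := by
      intro v
      have : (SemidirectProduct.inl (Multiplicative.ofAdd v) : Hyp p n C) ∈ Kgrp p n C W := by
        rw [hKtop]; exact Subgroup.mem_top _
      exact this
    -- but h s₀ = 0
    have hs₀0 : h s₀ = 0 := by
      have key : (1 - c) * (c - 1)⁻¹ = -1 := by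
        rw [← neg_sub c 1, neg_mul, mul_inv_cancel₀ hc0]
      show Multiplicative.toAdd ((MulAut.conj g₀ s₀).left) = 0
      rw [hg₀, conj_left]
      have h2 : u + Multiplicative.toAdd s₀.left - c • u = v₀ + (1 - c) • u := by
        rw [sub_smul, one_smul, ← hv₀]
        abel
      rw [h2, hu, smul_smul, key, neg_one_smul]
      abel
    -- span bound
    have hsub : h '' ↑S ⊆ insert 0 (↑((S.erase s₀).image h) : Set (Fin n → ZMod p)) := by
      rintro x ⟨s, hs, rfl⟩
      rcases eq_or_ne s s₀ with rfl | hne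
      · rw [hs₀0]; exact Set.mem_insert _ _
      · refine Set.mem_insert_of_mem _ ?_
        rw [Finset.coe_image]
        exact ⟨s, Finset.mem_coe.2 (Finset.mem_erase.2 ⟨hne, hs⟩), rfl⟩
    have hWle : W ≤ Submodule.span (ZMod p) (↑((S.erase s₀).image h) : Set (Fin n → ZMod p)) := by
      rw [hW]
      refine (Submodule.span_mono hsub).trans ?_
      rw [Submodule.span_insert_zero]
    have hspan : Submodule.span (ZMod p) (↑((S.erase s₀).image h) : Set (Fin n → ZMod p)) = ⊤ := by
      rw [eq_top_iff]
      intro v _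
      exact hWle (hWtop v)
    have hfr : n ≤ ((S.erase s₀).image h).card := by
      have h1 := finrank_span_finset_le_card (R := ZMod p) ((S.erase s₀).image h)
      rw [Set.finrank, hspan, finrank_top] at h1
      rwa [Module.finrank_pi, Fintype.card_fin] at h1
    have h3 : ((S.erase s₀).image h).card ≤ S.card - 1 := by
      refine (Finset.card_image_le).trans ?_
      rw [Finset.card_erase_of_mem hs₀S]
    have h4 : 1 ≤ S.card := Finset.card_pos.2 ⟨s₀, hs₀S⟩
    omega
end
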